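/- In the setting of the two-level certification adversary construction, for every bit position i ∈ {1,…,d²} and every x ∈ S, the number of y ∈ S with Γ_{xy} = 1 and x_i ≠ y_i is at most d. Consequently ‖Γ ∘ D_i‖ ≤ d for every i. -/

import Mathlib

open Matrix

noncomputable def specNorm {n : Type*} [Fintype n] [DecidableEq n] (M : Matrix n n ℝ) : ℝ :=
  ‖Matrix.toEuclideanCLM (𝕜 := ℝ) M‖

def inS (d : ℕ) (x : Fin d → Fin d → Bool) : Prop :=
  ∃ b : Fin d, (∀ i, x b i = true) ∧
    ∀ b', b' ≠ b → (Finset.univ.filter fun i => x b' i = false).card = 1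

instance (d : ℕ) : DecidablePred (inS d) := fun x => by unfold inS; infer_instance

lemma specNorm_le_of_rowsum {n : Type*} [Fintype n] [DecidableEq n] (M : Matrix n n ℝ) (d : ℕ)
    (h01 : ∀ x y, M x y = 0 ∨ M x y = 1)
    (hsym : ∀ x y, M x y = M y x)
    (hrow : ∀ x, ∑ y, M x y ≤ d) :
    specNorm M ≤ d := by
  have hMnn : ∀ x y, 0 ≤ M x y := fun x y => by rcases h01 x y with h | h <;> rw [h] <;> norm_num
  unfold specNorm
  apply ContinuousLinearMap.opNorm_le_bound _ (by positivity)
  intro v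
  have hw : ∀ x, (Matrix.toEuclideanCLM (𝕜 := ℝ) M v) x = ∑ y, M x y * v y := by
    intro x
    rfl
  have key : ∀ x, (∑ y, M x y * v y) ^ 2 ≤ (d : ℝ) * ∑ y, M x y * (v y) ^ 2 := by
    intro x
    have hcs := Finset.sum_mul_sq_le_sq_mul_sq Finset.univ (fun y => M x y)
      (fun y => M x y * v y)
    have h1 : ∀ y : n, M x y * (M x y * v y) = M x y * v y := fun y => by
      rcases h01 x y with h | h <;> rw [h] <;> ring
    have h2 : ∀ y : n, (M x y) ^ 2 = M x y := fun y => by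
      rcases h01 x y with h | h <;> rw [h] <;> ring
    have h3 : ∀ y : n, (M x y * v y) ^ 2 = M x y * (v y) ^ 2 := fun y => by
      rcases h01 x y with h | h <;> rw [h] <;> ring
    simp only [h1, h2, h3] at hcs
    refine le_trans hcs ?_
    apply mul_le_mul_of_nonneg_right (hrow x)
    exact Finset.sum_nonneg fun y _ => mul_nonneg (hMnn x y) (sq_nonneg _)
  have total : ∑ x, (∑ y, M x y * v y) ^ 2 ≤ ((d : ℝ) * ‖v‖) ^ 2 := by
    have hvn : ‖v‖ ^ 2 = ∑ y, (v y) ^ 2 := by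
      rw [EuclideanSpace.norm_eq, Real.sq_sqrt (by positivity)]
      simp [Real.norm_eq_abs, sq_abs]
    calc ∑ x, (∑ y, M x y * v y) ^ 2
        ≤ ∑ x, ((d : ℝ) * ∑ y, M x y * (v y) ^ 2) := Finset.sum_le_sum fun x _ => key x
      _ = (d : ℝ) * ∑ y, (∑ x, M x y) * (v y) ^ 2 := by
          rw [← Finset.mul_sum, Finset.sum_comm]
          simp_rw [Finset.sum_mul]
      _ ≤ (d : ℝ) * ∑ y, (d : ℝ) * (v y) ^ 2 := by
          apply mul_le_mul_of_nonneg_left _ (by positivity)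
          apply Finset.sum_le_sum
          intro y _
          apply mul_le_mul_of_nonneg_right _ (sq_nonneg _)
          calc ∑ x, M x y = ∑ x, M y x := by simp_rw [hsym]
            _ ≤ d := hrow y
      _ = ((d : ℝ) * ‖v‖) ^ 2 := by rw [← Finset.mul_sum, ← hvn]; ring
  have hn : ‖Matrix.toEuclideanCLM (𝕜 := ℝ) M v‖ ^ 2 = ∑ x, (∑ y, M x y * v y) ^ 2 := by
    rw [EuclideanSpace.norm_eq, Real.sq_sqrt (by positivity)]
    simp_rw [hw, Real.norm_eq_abs, sq_abs]
  nlinarith [norm_nonneg (Matrix.toEuclideanCLM (𝕜 := ℝ) M v), norm_nonneg v,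
    Nat.cast_nonneg (α := ℝ) d, mul_nonneg (Nat.cast_nonneg (α := ℝ) d) (norm_nonneg v)]

section
variable {d : ℕ} {f : {x : Fin d → Fin d → Bool // inS d x} → Fin d}

lemma block_card (hf : ∀ (x : {x : Fin d → Fin d → Bool // inS d x}) (i : Fin d), x.1 (f x) i = true)
    (x : {x : Fin d → Fin d → Bool // inS d x}) (b' : Fin d) (hb' : b' ≠ f x) :
    (Finset.univ.filter fun i => x.1 b' i = false).card = 1 := by
  obtain ⟨b, hb1, hb2⟩ := x.2
  have hfb : f x = b := by
    by_contra h
    have h1 : 0 < (Finset.univ.filter fun i => x.1 (f x) i = false).card := by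
      rw [hb2 (f x) h]; norm_num
    obtain ⟨i, hi⟩ := Finset.card_pos.mp h1
    simp only [Finset.mem_filter] at hi
    rw [hf x i] at hi
    exact absurd hi.2 (by simp)
  exact hb2 b' (by rw [hfb] at hb'; exact hb')

lemma char (hf : ∀ (x : {x : Fin d → Fin d → Bool // inS d x}) (i : Fin d), x.1 (f x) i = true)
    (x y : {x : Fin d → Fin d → Bool // inS d x}) (hne : f x ≠ f y)
    (hcard : (Finset.univ.filter fun p : Fin d × Fin d => x.1 p.1 p.2 ≠ y.1 p.1 p.2).card = 2) :
    ∃ k j₀ : Fin d,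
      (Finset.univ.filter fun p : Fin d × Fin d => x.1 p.1 p.2 ≠ y.1 p.1 p.2)
        = {(f x, k), (f y, j₀)} ∧
      ∀ b' i, y.1 b' i =
        if b' = f x then decide (i ≠ k) else if b' = f y then true else x.1 b' i := by
  obtain ⟨j₀, hj₀⟩ := Finset.card_eq_one.mp (block_card hf x (f y) (Ne.symm hne))
  obtain ⟨k, hk⟩ := Finset.card_eq_one.mp (block_card hf y (f x) hne)
  have hxj₀ : x.1 (f y) j₀ = false := by
    have : j₀ ∈ Finset.univ.filter fun i => x.1 (f y) i = false := by rw [hj₀]; simp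
    simpa using this
  have hyk : y.1 (f x) k = false := by
    have : k ∈ Finset.univ.filter fun i => y.1 (f x) i = false := by rw [hk]; simp
    simpa using this
  have hyk' : ∀ i, i ≠ k → y.1 (f x) i = true := by
    intro i hik
    have : i ∉ Finset.univ.filter fun i => y.1 (f x) i = false := by rw [hk]; simpa using hik
    simp only [Finset.mem_filter, Finset.mem_univ, true_and] at this
    simpa using this
  have hsub : ({(f x, k), (f y, j₀)} : Finset (Fin d × Fin d)) ⊆
      Finset.univ.filter fun p : Fin d × Fin d => x.1 p.1 p.2 ≠ y.1 p.1 p.2 := by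
    intro p hp
    simp only [Finset.mem_insert, Finset.mem_singleton] at hp
    rcases hp with h | h <;> subst h <;>
      simp only [Finset.mem_filter, Finset.mem_univ, true_and]
    · rw [hf x k, hyk]; simp
    · rw [hxj₀, hf y j₀]; simp
  have hcard2 : ({(f x, k), (f y, j₀)} : Finset (Fin d × Fin d)).card = 2 := by
    rw [Finset.card_insert_of_notMem (by simp [hne]), Finset.card_singleton]
  have hD : (Finset.univ.filter fun p : Fin d × Fin d => x.1 p.1 p.2 ≠ y.1 p.1 p.2)
      = {(f x, k), (f y, j₀)} :=
    (Finset.eq_of_subset_of_card_le hsub (by rw [hcard, hcard2])).symm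
  refine ⟨k, j₀, hD, ?_⟩
  intro b' i
  by_cases h1 : b' = f x
  · subst h1
    simp only [if_pos rfl]
    by_cases hik : i = k
    · subst hik; rw [hyk]; simp
    · rw [hyk' i hik]; simp [hik]
  · rw [if_neg h1]
    by_cases h2 : b' = f y
    · subst h2; rw [if_pos rfl, hf y i]
    · rw [if_neg h2]
      have : (b', i) ∉ Finset.univ.filter
          fun p : Fin d × Fin d => x.1 p.1 p.2 ≠ y.1 p.1 p.2 := by
        rw [hD]; simp [h1, h2]
      simp only [Finset.mem_filter, Finset.mem_univ, true_and, not_not] at this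
      exact this.symm

lemma count_le (hf : ∀ (x : {x : Fin d → Fin d → Bool // inS d x}) (i : Fin d), x.1 (f x) i = true)
    (Γ : Matrix {x : Fin d → Fin d → Bool // inS d x} {x : Fin d → Fin d → Bool // inS d x} ℝ)
    (hΓ : ∀ x y, Γ x y =
      if f x ≠ f y ∧
          (Finset.univ.filter fun p : Fin d × Fin d => x.1 p.1 p.2 ≠ y.1 p.1 p.2).card = 2
        then 1 else 0)
    (i : Fin d × Fin d) (x : {x : Fin d → Fin d → Bool // inS d x}) :
    (Finset.univ.filter fun y => Γ x y = 1 ∧ x.1 i.1 i.2 ≠ y.1 i.1 i.2).card ≤ d := by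
  obtain ⟨b, j⟩ := i
  set T := Finset.univ.filter
    fun y : {x : Fin d → Fin d → Bool // inS d x} => Γ x y = 1 ∧ x.1 b j ≠ y.1 b j with hT
  have hmem : ∀ y ∈ T, f x ≠ f y ∧
      (Finset.univ.filter fun p : Fin d × Fin d => x.1 p.1 p.2 ≠ y.1 p.1 p.2).card = 2 ∧
      x.1 b j ≠ y.1 b j := by
    intro y hy
    simp only [hT, Finset.mem_filter, Finset.mem_univ, true_and] at hy
    obtain ⟨h1, h2⟩ := hy
    rw [hΓ] at h1
    by_cases hc : f x ≠ f y ∧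
        (Finset.univ.filter fun p : Fin d × Fin d => x.1 p.1 p.2 ≠ y.1 p.1 p.2).card = 2
    · exact ⟨hc.1, hc.2, h2⟩
    · rw [if_neg hc] at h1; norm_num at h1
  by_cases hb : b = f x
  · set F : Fin d → (Fin d → Fin d → Bool) := fun c b' i =>
      if b' = f x then decide (i ≠ j) else if b' = c then true else x.1 b' i with hF
    have hsub : T.image Subtype.val ⊆ Finset.univ.image F := by
      intro z hz
      simp only [Finset.mem_image] at hz ⊢
      obtain ⟨y, hyT, rfl⟩ := hz
      obtain ⟨hne, hcard, hdiff⟩ := hmem y hyT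
      obtain ⟨k, j₀, hD, hdesc⟩ := char hf x y hne hcard
      have hbj : (b, j) ∈ ({(f x, k), (f y, j₀)} : Finset (Fin d × Fin d)) := by
        rw [← hD]; simp only [Finset.mem_filter, Finset.mem_univ, true_and]; exact hdiff
      simp only [Finset.mem_insert, Finset.mem_singleton, Prod.mk.injEq] at hbj
      have hjk : j = k := by
        rcases hbj with ⟨_, h⟩ | ⟨h, _⟩
        · exact h
        · exact absurd (hb ▸ h : f x = f y) hne
      refine ⟨f y, Finset.mem_univ _, ?_⟩
      funext b' i
      rw [hF]
      simp only
      rw [hdesc b' i, hjk]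
    calc T.card = (T.image Subtype.val).card :=
          (Finset.card_image_of_injective T Subtype.val_injective).symm
      _ ≤ (Finset.univ.image F).card := Finset.card_le_card hsub
      _ ≤ Finset.univ.card := Finset.card_image_le
      _ = d := by simp
  · set F : Fin d → (Fin d → Fin d → Bool) := fun t b' i =>
      if b' = f x then decide (i ≠ t) else if b' = b then true else x.1 b' i with hF
    have hsub : T.image Subtype.val ⊆ Finset.univ.image F := by
      intro z hz
      simp only [Finset.mem_image] at hz ⊢
      obtain ⟨y, hyT, rfl⟩ := hz
      obtain ⟨hne, hcard, hdiff⟩ := hmem y hyT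
      obtain ⟨k, j₀, hD, hdesc⟩ := char hf x y hne hcard
      have hbj : (b, j) ∈ ({(f x, k), (f y, j₀)} : Finset (Fin d × Fin d)) := by
        rw [← hD]; simp only [Finset.mem_filter, Finset.mem_univ, true_and]; exact hdiff
      simp only [Finset.mem_insert, Finset.mem_singleton, Prod.mk.injEq] at hbj
      have hbfy : b = f y := by
        rcases hbj with ⟨h, _⟩ | ⟨h, _⟩
        · exact absurd h hb
        · exact h
      refine ⟨k, Finset.mem_univ _, ?_⟩
      funext b' i
      rw [hF]
      simp only
      rw [hdesc b' i, hbfy]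
    calc T.card = (T.image Subtype.val).card :=
          (Finset.card_image_of_injective T Subtype.val_injective).symm
      _ ≤ (Finset.univ.image F).card := Finset.card_le_card hsub
      _ ≤ Finset.univ.card := Finset.card_image_le
      _ = d := by simp

end

theorem twoLevel_adversary_hadamard_bound (d : ℕ) (hd : 2 ≤ d)
    (f : {x : Fin d → Fin d → Bool // inS d x} → Fin d)
    (hf : ∀ (x : {x : Fin d → Fin d → Bool // inS d x}) (i : Fin d), x.1 (f x) i = true)
    (Γ : Matrix {x : Fin d → Fin d → Bool // inS d x} {x : Fin d → Fin d → Bool // inS d x} ℝ)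
    (hΓ : ∀ x y, Γ x y =
      if f x ≠ f y ∧
          (Finset.univ.filter fun p : Fin d × Fin d => x.1 p.1 p.2 ≠ y.1 p.1 p.2).card = 2
        then 1 else 0) :
    (∀ (i : Fin d × Fin d) (x : {x : Fin d → Fin d → Bool // inS d x}),
      (Finset.univ.filter fun y => Γ x y = 1 ∧ x.1 i.1 i.2 ≠ y.1 i.1 i.2).card ≤ d) ∧
    (∀ i : Fin d × Fin d,
      specNorm (Γ ⊙ Matrix.of fun x y => if x.1 i.1 i.2 ≠ y.1 i.1 i.2 then (1 : ℝ) else 0)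
        ≤ d) := by
  have part1 := count_le hf Γ hΓ
  refine ⟨part1, ?_⟩
  intro i
  set M := Γ ⊙ Matrix.of fun x y : {x : Fin d → Fin d → Bool // inS d x} =>
    if x.1 i.1 i.2 ≠ y.1 i.1 i.2 then (1 : ℝ) else 0 with hM
  have hMeq : ∀ x y, M x y =
      if ((f x ≠ f y ∧
            (Finset.univ.filter fun p : Fin d × Fin d => x.1 p.1 p.2 ≠ y.1 p.1 p.2).card = 2) ∧
          x.1 i.1 i.2 ≠ y.1 i.1 i.2)
        then 1 else 0 := by
    intro x y
    rw [hM, Matrix.hadamard_apply, Matrix.of_apply, hΓ]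
    by_cases h1 : f x ≠ f y ∧
        (Finset.univ.filter fun p : Fin d × Fin d => x.1 p.1 p.2 ≠ y.1 p.1 p.2).card = 2 <;>
      by_cases h2 : x.1 i.1 i.2 ≠ y.1 i.1 i.2 <;> simp [h1, h2]
  apply specNorm_le_of_rowsum M d
  · intro x y
    rw [hMeq]
    split_ifs <;> simp
  · intro x y
    rw [hMeq, hMeq]
    apply if_congr _ rfl rfl
    have hfilter : (Finset.univ.filter fun p : Fin d × Fin d => x.1 p.1 p.2 ≠ y.1 p.1 p.2)
        = (Finset.univ.filter fun p : Fin d × Fin d => y.1 p.1 p.2 ≠ x.1 p.1 p.2) :=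
      Finset.filter_congr fun p _ => ne_comm
    rw [hfilter]
    constructor
    · rintro ⟨⟨h1, h2⟩, h3⟩; exact ⟨⟨h1.symm, h2⟩, h3.symm⟩
    · rintro ⟨⟨h1, h2⟩, h3⟩; exact ⟨⟨h1.symm, h2⟩, h3.symm⟩
  · intro x
    have hiff : ∀ y, ((f x ≠ f y ∧
          (Finset.univ.filter fun p : Fin d × Fin d => x.1 p.1 p.2 ≠ y.1 p.1 p.2).card = 2) ∧
        x.1 i.1 i.2 ≠ y.1 i.1 i.2) ↔ (Γ x y = 1 ∧ x.1 i.1 i.2 ≠ y.1 i.1 i.2) := by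
      intro y
      rw [hΓ]
      by_cases hc : f x ≠ f y ∧
          (Finset.univ.filter fun p : Fin d × Fin d => x.1 p.1 p.2 ≠ y.1 p.1 p.2).card = 2 <;>
        simp [hc]
    have hsum : ∑ y, M x y =
        ((Finset.univ.filter fun y => Γ x y = 1 ∧ x.1 i.1 i.2 ≠ y.1 i.1 i.2).card : ℝ) := by
      rw [← Finset.sum_boole]
      apply Finset.sum_congr rfl
      intro y _
      rw [hMeq]
      exact if_congr (hiff y) rfl rfl
    rw [hsum]
    exact_mod_cast part1 i x
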